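/- Let X(t), Y(t) ∈ ℝ^{n×n} be defined by X(0) = I, Y(0) = O, X(t+1) = X(t)(I + D)^{−1}A⁺ − Y(t)(I + D)^{−1}A⁻, and Y(t+1) = Y(t)(I + D)^{−1}A⁺ − X(t)(I + D)^{−1}A⁻. For each pair of indices i, j, the series p_{ij} := Σ_{t=0}^{∞} X(t)_{ij}/(1 + D_{jj}) and q_{ij} := Σ_{t=0}^{∞} Y(t)_{ij}/(1 + D_{jj}) converge, with p_{ij} = (1/2)[ (I + D − A⁺ + A⁻)^{−1} + (I + L)^{−1} ]_{ij} and q_{ij} = (1/2)[ (I + D − A⁺ + A⁻)^{−1} − (I + L)^{−1} ]_{ij}; consequently, for every internal opinion vector s ∈ [−1,1]^n the equilibrium expressed opinion satisfies z_i = Σ_{j=1}^{n} (p_{ij} − q_{ij}) s_j for every i. -/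

import Mathlib

open Matrix

theorem stmt_5 (n : ℕ) (hn : 1 ≤ n) (A : Matrix (Fin n) (Fin n) ℝ)
    (hAsymm : A.IsSymm) (hAdiag : ∀ i, A i i = 0)
    (hAval : ∀ i j, A i j = -1 ∨ A i j = 0 ∨ A i j = 1)
    (Apos Aneg D L : Matrix (Fin n) (Fin n) ℝ)
    (hApos : ∀ i j, Apos i j = max (A i j) 0)
    (hAneg : ∀ i j, Aneg i j = min (A i j) 0)
    (hD : D = Matrix.diagonal fun i => ∑ j, |A i j|)
    (hL : L = D - A)
    (X Y : ℕ → Matrix (Fin n) (Fin n) ℝ)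
    (hX0 : X 0 = 1) (hY0 : Y 0 = 0)
    (hXrec : ∀ t, X (t + 1) = X t * ((1 + D)⁻¹ * Apos) - Y t * ((1 + D)⁻¹ * Aneg))
    (hYrec : ∀ t, Y (t + 1) = Y t * ((1 + D)⁻¹ * Apos) - X t * ((1 + D)⁻¹ * Aneg))
    (p q : Fin n → Fin n → ℝ)
    (hp : ∀ i j, p i j = ((1 / 2 : ℝ) • ((1 + D - Apos + Aneg)⁻¹ + (1 + L)⁻¹)) i j)
    (hq : ∀ i j, q i j = ((1 / 2 : ℝ) • ((1 + D - Apos + Aneg)⁻¹ - (1 + L)⁻¹)) i j) :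
    (∀ i j, HasSum (fun t : ℕ => X t i j / (1 + D j j)) (p i j)) ∧
    (∀ i j, HasSum (fun t : ℕ => Y t i j / (1 + D j j)) (q i j)) ∧
    (∀ s : Fin n → ℝ, (∀ i, s i ∈ Set.Icc (-1 : ℝ) 1) →
      ∀ i, ((1 + L)⁻¹ *ᵥ s) i = ∑ j, (p i j - q i j) * s j) := by
  letI : NormedRing (Matrix (Fin n) (Fin n) ℝ) := Matrix.linftyOpNormedRing
  letI : NormedAlgebra ℝ (Matrix (Fin n) (Fin n) ℝ) := Matrix.linftyOpNormedAlgebra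
  letI : CompleteSpace (Matrix (Fin n) (Fin n) ℝ) :=
    FiniteDimensional.complete ℝ (Matrix (Fin n) (Fin n) ℝ)
  -- basic data
  set d : Fin n → ℝ := fun i => ∑ j, |A i j| with hd
  set w : Fin n → ℝ := fun i => 1 + d i with hw
  have hd0 : ∀ i, 0 ≤ d i := fun i => Finset.sum_nonneg fun j _ => abs_nonneg _
  have hw0 : ∀ i, 0 < w i := fun i => by have := hd0 i; simp only [hw]; linarith
  have h1D : (1 : Matrix (Fin n) (Fin n) ℝ) + D = Matrix.diagonal w := by
    rw [hD, ← Matrix.diagonal_one, Matrix.diagonal_add]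
  have hdiagmul : Matrix.diagonal (fun i => (w i)⁻¹) * Matrix.diagonal w = 1 := by
    rw [Matrix.diagonal_mul_diagonal, ← Matrix.diagonal_one]
    exact congrArg Matrix.diagonal (funext fun i => inv_mul_cancel₀ (hw0 i).ne')
  have hinvD : (1 + D)⁻¹ = Matrix.diagonal (fun i => (w i)⁻¹) := by
    rw [h1D]
    exact Matrix.inv_eq_left_inv hdiagmul
  have hmulD : (1 + D) * (1 + D)⁻¹ = 1 := by
    rw [hinvD, h1D, Matrix.diagonal_mul_diagonal, ← Matrix.diagonal_one]
    exact congrArg Matrix.diagonal (funext fun i => mul_inv_cancel₀ (hw0 i).ne')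
  have hA : Apos + Aneg = A := by
    ext i j
    simp only [Matrix.add_apply, hApos, hAneg]
    rw [max_add_min]
    ring
  -- the two key matrices
  set B : Matrix (Fin n) (Fin n) ℝ := (1 + D)⁻¹ * (Apos - Aneg) with hB
  set C : Matrix (Fin n) (Fin n) ℝ := (1 + D)⁻¹ * A with hC
  have hBent : ∀ i j, B i j = |A i j| / w i := by
    intro i j
    have habs : Apos i j - Aneg i j = |A i j| := by
      rw [hApos, hAneg]
      rcases le_or_gt (A i j) 0 with h | h
      · rw [max_eq_right h, min_eq_left h, abs_of_nonpos h]; ring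
      · rw [max_eq_left h.le, min_eq_right h.le, abs_of_pos h]; ring
    rw [hB, hinvD, Matrix.diagonal_mul]
    simp only [Matrix.sub_apply]
    rw [habs, div_eq_inv_mul]
  have hCent : ∀ i j, C i j = A i j / w i := by
    intro i j
    rw [hC, hinvD, Matrix.diagonal_mul, div_eq_inv_mul]
  -- norm bounds
  have hrow : ∀ (M : Matrix (Fin n) (Fin n) ℝ),
      (∀ i j, |M i j| = |A i j| / w i) → ‖M‖ < 1 := by
    intro M hM
    rw [Matrix.linfty_opNorm_def]
    have : ((Finset.univ : Finset (Fin n)).sup fun i => ∑ j, ‖M i j‖₊) < (1 : NNReal) := by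
      rw [Finset.sup_lt_iff (by norm_num)]
      intro i _
      rw [← NNReal.coe_lt_coe]
      push_cast
      have : ∑ j, ‖M i j‖ = d i / w i := by
        simp only [Real.norm_eq_abs, hM]
        rw [← Finset.sum_div]
      rw [this]
      rw [div_lt_one (hw0 i)]
      have := hd0 i
      simp only [hw]
      linarith
    exact_mod_cast this
  have hBn : ‖B‖ < 1 := hrow B fun i j => by
    rw [hBent, abs_div, abs_abs, abs_of_pos (hw0 i)]
  have hCn : ‖C‖ < 1 := hrow C fun i j => by
    rw [hCent, abs_div, abs_of_pos (hw0 i)]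
  -- geometric sums
  have hSB : HasSum (fun t : ℕ => B ^ t) (∑' t : ℕ, B ^ t) :=
    (summable_geometric_of_norm_lt_one hBn).hasSum
  have hSC : HasSum (fun t : ℕ => C ^ t) (∑' t : ℕ, C ^ t) :=
    (summable_geometric_of_norm_lt_one hCn).hasSum
  set SB := ∑' t : ℕ, B ^ t with hSBdef
  set SC := ∑' t : ℕ, C ^ t with hSCdef
  have hinvB : (1 - B)⁻¹ = SB := Matrix.inv_eq_left_inv (geom_series_mul_neg B hBn)
  have hinvC : (1 - C)⁻¹ = SC := Matrix.inv_eq_left_inv (geom_series_mul_neg C hCn)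
  -- factorization
  have hfac1 : 1 + D - Apos + Aneg = (1 + D) * (1 - B) := by
    rw [hB, mul_sub, mul_one, ← mul_assoc, hmulD, one_mul]
    abel
  have hfac2 : 1 + L = (1 + D) * (1 - C) := by
    rw [hC, mul_sub, mul_one, ← mul_assoc, hmulD, one_mul, hL]
    abel
  have hP : (1 + D - Apos + Aneg)⁻¹ = SB * (1 + D)⁻¹ := by
    rw [hfac1, Matrix.mul_inv_rev, hinvB]
  have hLi : (1 + L)⁻¹ = SC * (1 + D)⁻¹ := by
    rw [hfac2, Matrix.mul_inv_rev, hinvC]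
  -- X and Y in terms of powers
  have hXY : ∀ t, X t + Y t = B ^ t ∧ X t - Y t = C ^ t := by
    intro t
    induction t with
    | zero => simp [hX0, hY0]
    | succ t ih =>
      obtain ⟨ih1, ih2⟩ := ih
      constructor
      · rw [hXrec, hYrec, pow_succ, ← ih1, hB, mul_sub]
        noncomm_ring
      · rw [hXrec, hYrec, pow_succ, ← ih2, hC, ← hA, mul_add]
        noncomm_ring
  have hXent : ∀ t i j, X t i j = ((B ^ t) i j + (C ^ t) i j) / 2 := by
    intro t i j
    have h1 := congrArg (fun M => M i j) (hXY t).1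
    have h2 := congrArg (fun M => M i j) (hXY t).2
    simp only [Matrix.add_apply, Matrix.sub_apply] at h1 h2
    linarith
  have hYent : ∀ t i j, Y t i j = ((B ^ t) i j - (C ^ t) i j) / 2 := by
    intro t i j
    have h1 := congrArg (fun M => M i j) (hXY t).1
    have h2 := congrArg (fun M => M i j) (hXY t).2
    simp only [Matrix.add_apply, Matrix.sub_apply] at h1 h2
    linarith
  -- entrywise convergence
  have key : ∀ (M S : Matrix (Fin n) (Fin n) ℝ), HasSum (fun t : ℕ => M ^ t) S →
      ∀ i j, HasSum (fun t : ℕ => (M ^ t) i j) (S i j) := by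
    intro M S hS i j
    let e : Matrix (Fin n) (Fin n) ℝ →ₗ[ℝ] ℝ :=
      { toFun := fun N => N i j
        map_add' := fun a b => rfl
        map_smul' := fun c a => rfl }
    have hcont : Continuous e := e.continuous_of_finiteDimensional
    exact hS.map e.toAddMonoidHom hcont
  have hDjj : ∀ j, 1 + D j j = w j := by
    intro j
    rw [hD]
    simp [Matrix.diagonal_apply_eq, hw, hd]
  have hmulinvD : ∀ (M : Matrix (Fin n) (Fin n) ℝ) i j,
      (M * (1 + D)⁻¹) i j = M i j / w j := by
    intro M i j
    rw [hinvD, Matrix.mul_diagonal]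
    ring
  refine ⟨?_, ?_, ?_⟩
  · intro i j
    have hB' := key B SB hSB i j
    have hC' := key C SC hSC i j
    have := ((hB'.div_const (w j)).add (hC'.div_const (w j))).div_const 2
    have hval : (SB i j / w j + SC i j / w j) / 2 = p i j := by
      rw [hp i j]
      simp only [Matrix.smul_apply, Matrix.add_apply, hP, hLi, hmulinvD, smul_eq_mul]
      ring
    rw [hval] at this
    have hf : (fun t : ℕ => X t i j / (1 + D j j)) =
        fun t => ((B ^ t) i j / w j + (C ^ t) i j / w j) / 2 := by
      funext t
      rw [hXent, hDjj]
      ring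
    rw [hf]; exact this
  · intro i j
    have hB' := key B SB hSB i j
    have hC' := key C SC hSC i j
    have := ((hB'.div_const (w j)).sub (hC'.div_const (w j))).div_const 2
    have hval : (SB i j / w j - SC i j / w j) / 2 = q i j := by
      rw [hq i j]
      simp only [Matrix.smul_apply, Matrix.sub_apply, hP, hLi, hmulinvD, smul_eq_mul]
      ring
    rw [hval] at this
    have hf : (fun t : ℕ => Y t i j / (1 + D j j)) =
        fun t => ((B ^ t) i j / w j - (C ^ t) i j / w j) / 2 := by
      funext t
      rw [hYent, hDjj]
      ring
    rw [hf]; exact this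
  · intro s _ i
    have hpq : ∀ j, p i j - q i j = (1 + L)⁻¹ i j := by
      intro j
      rw [hp i j, hq i j]
      simp only [Matrix.smul_apply, Matrix.add_apply, Matrix.sub_apply, smul_eq_mul]
      ring
    rw [Matrix.mulVec, dotProduct]
    exact Finset.sum_congr rfl fun j _ => by rw [hpq]
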